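/- Let n ≥ 2 and k = ⌊n/2⌋. Let φ : ℚ[x₁,…,xₙ] → ℚ[y₁,…,y_k] be the ℚ-algebra homomorphism determined by φ(x_i) = y_i and φ(x_{k+i}) = −y_i for 1 ≤ i ≤ k, and (when n is odd) φ(xₙ) = 0. Then the image under φ of the subalgebra of symmetric polynomials of ℚ[x₁,…,xₙ] is exactly the subalgebra of ℚ[y₁,…,y_k] generated by the elementary symmetric polynomials e₁(y₁²,…,y_k²),…,e_k(y₁²,…,y_k²), i.e., the subalgebra of polynomials that are symmetric functions of the squares y₁²,…,y_k². -/

import Mathlib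

open MvPolynomial


noncomputable def Esq (k j : ℕ) : MvPolynomial (Fin k) ℚ :=
  MvPolynomial.aeval (fun i : Fin k => (MvPolynomial.X i : MvPolynomial (Fin k) ℚ) ^ 2)
    (esymm (Fin k) ℚ j)

-- step 2: product of (X^2 - C (y_i^2))
lemma step2 (k : ℕ) :
    ∏ i : Fin k, (Polynomial.X ^ 2 -
        Polynomial.C ((MvPolynomial.X i : MvPolynomial (Fin k) ℚ) ^ 2)) =
      ∑ j ∈ Finset.range (k + 1),
        Polynomial.C ((-1) ^ j * Esq k j) * Polynomial.X ^ (2 * (k - j)) := by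
  classical
  have h1 : (∏ i : Fin k, (Polynomial.X +
        Polynomial.C (-(MvPolynomial.X i : MvPolynomial (Fin k) ℚ) ^ 2))) =
      ∑ j ∈ Finset.range (k + 1),
        Polynomial.C ((-1) ^ j * Esq k j) * Polynomial.X ^ (k - j) := by
    have := Multiset.prod_X_add_C_eq_sum_esymm
      ((Finset.univ.val.map (fun i : Fin k => -(MvPolynomial.X i : MvPolynomial (Fin k) ℚ) ^ 2)))
    rw [Multiset.map_map] at this
    simp only [Function.comp] at this
    rw [Finset.prod_eq_multiset_prod]
    rw [this]
    have hcard : Multiset.card (Finset.univ.val.map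
        (fun i : Fin k => -(MvPolynomial.X i : MvPolynomial (Fin k) ℚ) ^ 2)) = k := by
      simp
    rw [hcard]
    refine Finset.sum_congr rfl fun j hj => ?_
    congr 1
    congr 1
    have : (Finset.univ.val.map
        (fun i : Fin k => -(MvPolynomial.X i : MvPolynomial (Fin k) ℚ) ^ 2)) =
        Multiset.map Neg.neg (Finset.univ.val.map
          (fun i : Fin k => (MvPolynomial.X i : MvPolynomial (Fin k) ℚ) ^ 2)) := by
      rw [Multiset.map_map]; rfl
    rw [this, Multiset.esymm_neg, Esq, aeval_esymm_eq_multiset_esymm]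
  -- apply eval₂ C (X^2)
  have := congrArg (Polynomial.eval₂ Polynomial.C (Polynomial.X ^ 2 :
      Polynomial (MvPolynomial (Fin k) ℚ))) h1
  rw [Polynomial.eval₂_finset_prod] at this
  rw [Polynomial.eval₂_finset_sum] at this
  simp only [Polynomial.eval₂_add, Polynomial.eval₂_mul, Polynomial.eval₂_X,
    Polynomial.eval₂_C, Polynomial.eval₂_pow, ← pow_mul] at this
  convert this using 2 with i _ j hj
  ring_nf
  rw [map_neg]
  ring

lemma key_esymm (n : ℕ) (φ : MvPolynomial (Fin n) ℚ →ₐ[ℚ] MvPolynomial (Fin (n / 2)) ℚ)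
    (hφ : ∀ i : Fin n, φ (X i) =
      if h1 : (i : ℕ) < n / 2 then X ⟨i, h1⟩
      else if h2 : (i : ℕ) < 2 * (n / 2) then
        -X ⟨(i : ℕ) - n / 2, Nat.sub_lt_left_of_lt_add (Nat.le_of_not_lt h1) (by omega)⟩
      else 0) (m : ℕ) (hm : m ≤ n) :
    φ (esymm (Fin n) ℚ m) =
      if m % 2 = 0 then (-1) ^ (m / 2) * Esq (n / 2) (m / 2) else 0 := by
  classical
  set R := MvPolynomial (Fin (n / 2)) ℚ
  set fval : ℕ → R := fun i =>
    if h1 : i < n / 2 then X ⟨i, h1⟩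
    else if h2 : i < 2 * (n / 2) then -X ⟨i - n / 2, by omega⟩
    else 0 with hfval
  have hA : φ (esymm (Fin n) ℚ m) = (Finset.univ.val.map (⇑φ ∘ X)).esymm m := by
    conv_lhs => rw [aeval_unique φ]
    rw [aeval_esymm_eq_multiset_esymm]
  have hB : φ (esymm (Fin n) ℚ m) =
      (∏ i : Fin n, (Polynomial.X + Polynomial.C ((⇑φ ∘ X) i))).coeff (n - m) := by
    rw [hA, Finset.prod_X_add_C_coeff _ _ (by simp)]
    simp only [Finset.card_univ, Fintype.card_fin]
    rw [show n - (n - m) = m from by omega, Finset.esymm_map_val]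
  have hfv : ∀ i : Fin n, (⇑φ ∘ X) i = fval i := by
    intro i
    simp only [Function.comp, hφ i, hfval]
  have habC : ∀ a : R, (Polynomial.X + Polynomial.C a) * (Polynomial.X + Polynomial.C (-a)) =
      Polynomial.X ^ 2 - Polynomial.C (a ^ 2) := by
    intro a; rw [map_neg, map_pow]; ring
  have hprod : (∏ i : Fin n, (Polynomial.X + Polynomial.C ((⇑φ ∘ X) i))) =
      (∑ j ∈ Finset.range (n / 2 + 1),
        Polynomial.C ((-1) ^ j * Esq (n / 2) j) * Polynomial.X ^ (2 * (n / 2 - j))) *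
        Polynomial.X ^ (n - 2 * (n / 2)) := by
    rw [← step2 (n / 2)]
    have e1 : (∏ i : Fin n, (Polynomial.X + Polynomial.C ((⇑φ ∘ X) i))) =
        ∏ i ∈ Finset.range n, (Polynomial.X + Polynomial.C (fval i)) := by
      rw [← Fin.prod_univ_eq_prod_range (fun i => Polynomial.X + Polynomial.C (fval i)) n]
      exact Finset.prod_congr rfl fun i _ => by rw [hfv i]
    rw [e1]
    have hsum : ∏ i ∈ Finset.range n, (Polynomial.X + Polynomial.C (fval i)) =
        (∏ i ∈ Finset.range (2 * (n / 2)), (Polynomial.X + Polynomial.C (fval i))) *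
        ∏ i ∈ Finset.range (n - 2 * (n / 2)),
          (Polynomial.X + Polynomial.C (fval (2 * (n / 2) + i))) := by
      rw [← Finset.prod_range_add,
        show 2 * (n / 2) + (n - 2 * (n / 2)) = n from by omega]
    rw [hsum]
    congr 1
    · have hsum2 : ∏ i ∈ Finset.range (2 * (n / 2)), (Polynomial.X + Polynomial.C (fval i)) =
          (∏ i ∈ Finset.range (n / 2), (Polynomial.X + Polynomial.C (fval i))) *
          ∏ i ∈ Finset.range (n / 2), (Polynomial.X + Polynomial.C (fval (n / 2 + i))) := by
        rw [← Finset.prod_range_add,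
          show n / 2 + n / 2 = 2 * (n / 2) from by omega]
      rw [hsum2, ← Finset.prod_mul_distrib]
      rw [← Fin.prod_univ_eq_prod_range (fun i =>
        (Polynomial.X + Polynomial.C (fval i)) *
        (Polynomial.X + Polynomial.C (fval (n / 2 + i)))) (n / 2)]
      refine Finset.prod_congr rfl fun i _ => ?_
      · 
        have h1 : (i : ℕ) < n / 2 := i.isLt
        have h2 : ¬ (n / 2 + (i : ℕ) < n / 2) := by omega
        have h3 : n / 2 + (i : ℕ) < 2 * (n / 2) := by omega
        rw [hfval]
        simp only [dif_pos h1, dif_neg h2, dif_pos h3]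
        have h4 : n / 2 + (i : ℕ) - n / 2 = (i : ℕ) := by omega
        rw [show (⟨n / 2 + (i : ℕ) - n / 2, by omega⟩ : Fin (n / 2)) = ⟨i, h1⟩ from by
          simp [h4]]
        rw [habC (X ⟨i, h1⟩), show (⟨(i : ℕ), h1⟩ : Fin (n / 2)) = i from by
          simp [Fin.eta]]
    · rw [Finset.prod_congr rfl (fun i hi => ?_), Finset.prod_const, Finset.card_range]
      have h1 : ¬ (2 * (n / 2) + i < n / 2) := by omega
      have h2 : ¬ (2 * (n / 2) + i < 2 * (n / 2)) := by omega
      rw [hfval]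
      simp only [dif_neg h1, dif_neg h2, map_zero, add_zero]
  rw [hB, hprod, Polynomial.coeff_mul_X_pow']
  by_cases hpar : m % 2 = 0
  · have hle : n - 2 * (n / 2) ≤ n - m := by omega
    rw [if_pos hle, if_pos hpar, Polynomial.finset_sum_coeff]
    rw [Finset.sum_eq_single (m / 2)]
    · rw [Polynomial.coeff_C_mul, Polynomial.coeff_X_pow, if_pos (by omega), mul_one]
    · intro j hj hne
      rw [Polynomial.coeff_C_mul, Polynomial.coeff_X_pow, if_neg, mul_zero]
      simp only [Finset.mem_range] at hj
      omega
    · intro h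
      exact absurd (Finset.mem_range.mpr (by omega)) h
  · rw [if_neg hpar]
    by_cases hle : n - 2 * (n / 2) ≤ n - m
    · rw [if_pos hle, Polynomial.finset_sum_coeff]
      refine Finset.sum_eq_zero fun j hj => ?_
      rw [Polynomial.coeff_C_mul, Polynomial.coeff_X_pow, if_neg, mul_zero]
      simp only [Finset.mem_range] at hj
      omega
    · rw [if_neg hle]


/-- The image under the map `φ : ℚ[x₁,…,xₙ] → ℚ[y₁,…,y_k]` (with `k = ⌊n/2⌋`,
`φ(xᵢ) = yᵢ`, `φ(x_{k+i}) = -yᵢ`, and `φ(xₙ) = 0` when `n` is odd) of the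
subalgebra of symmetric polynomials is exactly the subalgebra generated by the
elementary symmetric polynomials in the squares `y₁², …, y_k²`. -/
theorem image_symmetric_eq_adjoin_esymm_squares (n : ℕ) (hn : 2 ≤ n)
    (φ : MvPolynomial (Fin n) ℚ →ₐ[ℚ] MvPolynomial (Fin (n / 2)) ℚ)
    (hφ : ∀ i : Fin n, φ (X i) =
      if h1 : (i : ℕ) < n / 2 then X ⟨i, h1⟩
      else if h2 : (i : ℕ) < 2 * (n / 2) then
        -X ⟨(i : ℕ) - n / 2, by omega⟩
      else 0) :
    Subalgebra.map φ (symmetricSubalgebra (Fin n) ℚ) =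
      Algebra.adjoin ℚ (Set.range fun j : Fin (n / 2) =>
        aeval (fun i : Fin (n / 2) => (X i : MvPolynomial (Fin (n / 2)) ℚ) ^ 2)
          (esymm (Fin (n / 2)) ℚ ((j : ℕ) + 1))) := by
  classical
  have hsym : symmetricSubalgebra (Fin n) ℚ =
      Algebra.adjoin ℚ (Set.range fun i : Fin n => esymm (Fin n) ℚ ((i : ℕ) + 1)) := by
    apply le_antisymm
    · intro p hp
      obtain ⟨q, hq⟩ := esymmAlgHom_fin_surjective ℚ (le_refl n) ⟨p, hp⟩
      have hq' : p = MvPolynomial.aeval (fun i : Fin n => esymm (Fin n) ℚ ((i : ℕ) + 1)) q := by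
        have := congrArg Subtype.val hq
        rw [esymmAlgHom_apply] at this
        exact this.symm
      rw [Algebra.adjoin_range_eq_range_aeval]
      exact ⟨q, hq'.symm⟩
    · rw [Algebra.adjoin_le_iff]
      rintro _ ⟨i, rfl⟩
      exact esymm_isSymmetric _ _ _
  rw [hsym, AlgHom.map_adjoin, ← Set.range_comp]
  apply le_antisymm
  · rw [Algebra.adjoin_le_iff]
    rintro _ ⟨i, rfl⟩
    simp only [Function.comp_apply]
    rw [key_esymm n φ hφ ((i : ℕ) + 1) (by omega)]
    by_cases hpar : ((i : ℕ) + 1) % 2 = 0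
    · rw [if_pos hpar]
      have hi := i.isLt
      refine mul_mem (pow_mem (neg_mem (one_mem _)) _) ?_
      apply Algebra.subset_adjoin
      refine ⟨⟨((i : ℕ) + 1) / 2 - 1, by omega⟩, ?_⟩
      show MvPolynomial.aeval _ (esymm _ ℚ ((((i : ℕ) + 1) / 2 - 1) + 1)) = _
      rw [show (((i : ℕ) + 1) / 2 - 1) + 1 = ((i : ℕ) + 1) / 2 from by omega]
      rfl
    · rw [if_neg hpar]
      exact zero_mem _
  · rw [Algebra.adjoin_le_iff]
    rintro _ ⟨j, rfl⟩
    have hj := j.isLt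
    have h2j : 2 * ((j : ℕ) + 1) ≤ n := by omega
    have hmem : φ (esymm (Fin n) ℚ (2 * ((j : ℕ) + 1))) ∈
        Set.range (⇑φ ∘ fun i : Fin n => esymm (Fin n) ℚ ((i : ℕ) + 1)) := by
      refine ⟨⟨2 * ((j : ℕ) + 1) - 1, by omega⟩, ?_⟩
      simp only [Function.comp_apply]
      rw [show 2 * ((j : ℕ) + 1) - 1 + 1 = 2 * ((j : ℕ) + 1) from by omega]
    have hval := key_esymm n φ hφ (2 * ((j : ℕ) + 1)) h2j
    rw [if_pos (by omega), show 2 * ((j : ℕ) + 1) / 2 = (j : ℕ) + 1 from by omega] at hval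
    have hE : MvPolynomial.aeval
        (fun i : Fin (n / 2) => (X i : MvPolynomial (Fin (n / 2)) ℚ) ^ 2)
          (esymm (Fin (n / 2)) ℚ ((j : ℕ) + 1)) =
        (-1 : MvPolynomial (Fin (n / 2)) ℚ) ^ ((j : ℕ) + 1) *
          φ (esymm (Fin n) ℚ (2 * ((j : ℕ) + 1))) := by
      rw [hval, ← mul_assoc, ← mul_pow]
      simp [Esq]
    beta_reduce
    rw [hE]
    exact mul_mem (pow_mem (neg_mem (one_mem _)) _) (Algebra.subset_adjoin hmem)
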